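/- Any factor of a finite automaton is clopen-regular: if (Y,g) is a dynamical system and there exist a finite automaton (X,f) and a continuous surjection φ : X → Y with g ∘ φ = φ ∘ f, then L(g,α) is regular for every finite clopen cover α of Y. -/

import Mathlib

open Set Function Topology

/-- The ω-limit set of a set `A` under `f`: `ω(A) = ⋂ₙ closure (⋃_{m>n} f^m(A))`. -/
def omegaSet {X : Type*} [TopologicalSpace X] (f : X → X) (A : Set X) : Set X :=
  ⋂ n : ℕ, closure (⋃ m : ℕ, ⋃ _ : n < m, f^[m] '' A)

/-- A dynamical system is chaotic if its periodic points are dense and it is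
topologically transitive. -/
def IsChaotic {X : Type*} [TopologicalSpace X] (f : X → X) : Prop :=
  Dense {x : X | ∃ n : ℕ, 0 < n ∧ f^[n] x = x} ∧
  ∀ U V : Set X, IsOpen U → IsOpen V → U.Nonempty → V.Nonempty →
    ∃ k : ℕ, 0 < k ∧ (f^[k] '' U ∩ V).Nonempty

/-- `f` restricted to the invariant set `S` is a chaotic dynamical system. -/
def ChaoticOn {X : Type*} [TopologicalSpace X] (f : X → X) (S : Set X) : Prop :=
  ∃ h : MapsTo f S S, IsChaotic (MapsTo.restrict f S S h)

/-- A system has chaotic limits if every point belongs to a set whose ω-limit set is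
a chaotic system. -/
def HasChaoticLimits {X : Type*} [TopologicalSpace X] (f : X → X) : Prop :=
  ∀ x : X, ∃ A : Set X, x ∈ A ∧ ChaoticOn f (omegaSet f A)
/-- The discontinuum over `A, Q, B`: two-sided sequences with letters from `A` at
positive coordinates, a letter from `Q` at coordinate `0`, and letters from `B` at
negative coordinates. -/
def Discontinuum (A Q B : Type*) : Type _ :=
  {u : ℤ → A ⊕ Q ⊕ B //
    (∀ i : ℤ, 0 < i → ∃ a : A, u i = Sum.inl a) ∧
    (∃ q : Q, u 0 = Sum.inr (Sum.inl q)) ∧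
    (∀ i : ℤ, i < 0 → ∃ b : B, u i = Sum.inr (Sum.inr b))}

/-- The topology of the discontinuum: the product topology of the discrete topologies,
i.e. the topology of the metric ρ(u,v) = 2^{-inf{i ≥ 0 : uᵢ ≠ vᵢ or u₋ᵢ ≠ v₋ᵢ}}. -/
instance (A Q B : Type*) : TopologicalSpace (Discontinuum A Q B) := by
  letI : TopologicalSpace (A ⊕ Q ⊕ B) := ⊥
  unfold Discontinuum
  infer_instance

/-- The inner state of the automaton, i.e. the coordinate `u 0`. -/
noncomputable def Discontinuum.state {A Q B : Type*} (u : Discontinuum A Q B) : Q :=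
  u.2.2.1.choose

/-- The next input symbol, i.e. the coordinate `u 1`. -/
noncomputable def Discontinuum.input {A Q B : Type*} (u : Discontinuum A Q B) : A :=
  (u.2.1 1 one_pos).choose

/-- The dynamical system of a finite automaton with input function `fA` and output
function `fB`: it reads a symbol from the input tape, changes its state, and writes
a symbol to the output tape. -/
noncomputable def autMap {A Q B : Type*} (fA : Q × A → Q) (fB : Q → B)
    (u : Discontinuum A Q B) : Discontinuum A Q B :=
  ⟨fun i =>
    if i = -1 then Sum.inr (Sum.inr (fB u.state))
    else if i = 0 then Sum.inr (Sum.inl (fA (u.state, u.input)))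
    else u.1 (i + 1), by
      refine ⟨fun i hi => ?_, ?_, fun i hi => ?_⟩
      · beta_reduce
        rw [if_neg (by omega), if_neg (by omega)]
        exact u.2.1 (i + 1) (by omega)
      · exact ⟨fA (u.state, u.input), by beta_reduce; rw [if_neg (by norm_num), if_pos rfl]⟩
      · by_cases h : i = -1
        · exact ⟨fB u.state, by beta_reduce; rw [if_pos h]⟩
        · beta_reduce
          rw [if_neg h, if_neg (by omega)]
          exact u.2.2.2 (i + 1) (by omega)⟩

/-- A dynamical system `g` is a factor of a finite automaton if there are nonempty
finite sets `A, Q, B`, input and output functions `fA, fB`, and a continuous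
surjection `φ` from the corresponding finite automaton onto `(Y, g)` with
`g ∘ φ = φ ∘ f`. -/
def IsFactorOfFiniteAutomaton {Y : Type*} [TopologicalSpace Y] (g : Y → Y) : Prop :=
  ∃ (A Q B : Type) (_ : Fintype A) (_ : Fintype Q) (_ : Fintype B)
    (_ : Nonempty A) (_ : Nonempty Q) (_ : Nonempty B)
    (fA : Q × A → Q) (fB : Q → B) (φ : Discontinuum A Q B → Y),
    Continuous φ ∧ Surjective φ ∧ g ∘ φ = φ ∘ autMap fA fB
/-- The language generated by a family `α` of subsets of `X`: all finite words
`u ∈ α*` such that some `x ∈ X` has itinerary `u`, i.e. `f^i(x) ∈ uᵢ` for `i < |u|`. -/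
def genLanguage {X : Type*} (f : X → X) (α : Set (Set X)) : Language ↥α :=
  {w : List ↥α | ∃ x : X, ∀ i : Fin w.length, f^[(i : ℕ)] x ∈ (w.get i : Set X)}

/-- A dynamical system is clopen-regular if the language generated by every finite
clopen cover is regular. -/
def ClopenRegular {X : Type*} [TopologicalSpace X] (f : X → X) : Prop :=
  ∀ α : Set (Set X), α.Finite → (∀ S ∈ α, IsClopen S) → ⋃₀ α = Set.univ →
    (genLanguage f α).IsRegular

section AuxTop

variable {A Q B : Type*}

/-- Agreement on the window `[-N, N]` determines membership in `C`. -/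
def WDet (N : ℕ) (C : Set (Discontinuum A Q B)) : Prop :=
  ∀ u v : Discontinuum A Q B, (∀ j : ℤ, |j| ≤ (N : ℤ) → u.1 j = v.1 j) → u ∈ C → v ∈ C

lemma WDet.mono {N M : ℕ} {C : Set (Discontinuum A Q B)} (h : WDet N C) (hNM : N ≤ M) :
    WDet M C := fun u v hag hu => h u v (fun j hj => hag j (hj.trans (by exact_mod_cast hNM))) hu

lemma discontinuum_closed :
    letI : TopologicalSpace (A ⊕ Q ⊕ B) := ⊥
    IsClosed {u : ℤ → A ⊕ Q ⊕ B |
      (∀ i : ℤ, 0 < i → ∃ a : A, u i = Sum.inl a) ∧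
      (∃ q : Q, u 0 = Sum.inr (Sum.inl q)) ∧
      (∀ i : ℤ, i < 0 → ∃ b : B, u i = Sum.inr (Sum.inr b))} := by
  letI : TopologicalSpace (A ⊕ Q ⊕ B) := ⊥
  haveI : DiscreteTopology (A ⊕ Q ⊕ B) := ⟨rfl⟩
  have key : ∀ (i : ℤ) (T : Set (A ⊕ Q ⊕ B)),
      IsClosed {u : ℤ → A ⊕ Q ⊕ B | u i ∈ T} :=
    fun i T => IsClosed.preimage (continuous_apply i) (isClosed_discrete T)
  have h1 : IsClosed {u : ℤ → A ⊕ Q ⊕ B | ∀ i : ℤ, 0 < i → ∃ a : A, u i = Sum.inl a} := by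
    have : {u : ℤ → A ⊕ Q ⊕ B | ∀ i : ℤ, 0 < i → ∃ a : A, u i = Sum.inl a} =
        ⋂ i ∈ {i : ℤ | 0 < i}, {u : ℤ → A ⊕ Q ⊕ B | u i ∈ {s | ∃ a : A, s = Sum.inl a}} := by
      ext u; simp
    rw [this]; exact isClosed_biInter fun i _ => key i _
  have h2 : IsClosed {u : ℤ → A ⊕ Q ⊕ B | ∃ q : Q, u 0 = Sum.inr (Sum.inl q)} :=
    key 0 {s | ∃ q : Q, s = Sum.inr (Sum.inl q)}
  have h3 : IsClosed {u : ℤ → A ⊕ Q ⊕ B | ∀ i : ℤ, i < 0 → ∃ b : B, u i = Sum.inr (Sum.inr b)} := by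
    have : {u : ℤ → A ⊕ Q ⊕ B | ∀ i : ℤ, i < 0 → ∃ b : B, u i = Sum.inr (Sum.inr b)} =
        ⋂ i ∈ {i : ℤ | i < 0}, {u : ℤ → A ⊕ Q ⊕ B | u i ∈ {s | ∃ b : B, s = Sum.inr (Sum.inr b)}} := by
      ext u; simp
    rw [this]; exact isClosed_biInter fun i _ => key i _
  exact (h1.inter (h2.inter h3)).mono (le_refl _) |>.mono (le_refl _)

lemma discontinuum_compactSpace [Finite A] [Finite Q] [Finite B] :
    CompactSpace (Discontinuum A Q B) := by
  letI : TopologicalSpace (A ⊕ Q ⊕ B) := ⊥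
  haveI : DiscreteTopology (A ⊕ Q ⊕ B) := ⟨rfl⟩
  have hc : IsCompact {u : ℤ → A ⊕ Q ⊕ B |
      (∀ i : ℤ, 0 < i → ∃ a : A, u i = Sum.inl a) ∧
      (∃ q : Q, u 0 = Sum.inr (Sum.inl q)) ∧
      (∀ i : ℤ, i < 0 → ∃ b : B, u i = Sum.inr (Sum.inr b))} :=
    discontinuum_closed.isCompact
  exact isCompact_iff_compactSpace.mp hc

end AuxTop
section AuxWdet

variable {A Q B : Type*} [Finite A] [Finite Q] [Finite B]

lemma exists_wdet (C : Set (Discontinuum A Q B)) (hC : IsClopen C) :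
    ∃ N : ℕ, WDet N C := by
  letI : TopologicalSpace (A ⊕ Q ⊕ B) := ⊥
  haveI : DiscreteTopology (A ⊕ Q ⊕ B) := ⟨rfl⟩
  haveI : CompactSpace (Discontinuum A Q B) := discontinuum_compactSpace
  classical
  -- for each point of C there is a window size determining a neighborhood inside C
  have step : ∀ u : Discontinuum A Q B, u ∈ C → ∃ n : ℕ,
      {v : Discontinuum A Q B | ∀ j : ℤ, |j| ≤ (n : ℤ) → v.1 j = u.1 j} ⊆ C := by
    intro u hu
    have hmem : C ∈ 𝓝 u := hC.2.mem_nhds hu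
    erw [mem_nhds_subtype] at hmem
    obtain ⟨t, ht, hsub⟩ := hmem
    rw [nhds_pi] at ht
    obtain ⟨I, hIfin, s, hs, hpi⟩ := Filter.mem_pi.mp ht
    refine ⟨hIfin.toFinset.sup fun j => j.natAbs, fun v hv => ?_⟩
    apply hsub
    have hvt : v.1 ∈ Set.pi I s := by
      intro j hj
      have hj' : |j| ≤ ((hIfin.toFinset.sup fun j => j.natAbs : ℕ) : ℤ) := by
        have := Finset.le_sup (f := fun j : ℤ => j.natAbs) (hIfin.mem_toFinset.mpr hj)
        rw [Int.abs_eq_natAbs]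
        exact_mod_cast this
      rw [hv j hj']
      have := hs j
      rwa [nhds_discrete, Filter.mem_pure] at this
    exact hpi hvt
  choose! n hn using step
  -- the window neighborhoods are open
  have hopen : ∀ (u : Discontinuum A Q B) (m : ℕ),
      IsOpen {v : Discontinuum A Q B | ∀ j : ℤ, |j| ≤ (m : ℤ) → v.1 j = u.1 j} := by
    intro u m
    have : {v : Discontinuum A Q B | ∀ j : ℤ, |j| ≤ (m : ℤ) → v.1 j = u.1 j} =
        ⋂ j ∈ {j : ℤ | |j| ≤ (m : ℤ)}, {v : Discontinuum A Q B | v.1 j = u.1 j} := by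
      ext v; simp
    rw [this]
    have hfin : {j : ℤ | |j| ≤ (m : ℤ)}.Finite := by
      have : {j : ℤ | |j| ≤ (m : ℤ)} ⊆ Set.Icc (-(m : ℤ)) m := fun j hj => abs_le.mp hj
      exact (Set.finite_Icc _ _).subset this
    refine hfin.isOpen_biInter fun j _ => ?_
    have hco : Continuous (fun v : Discontinuum A Q B => v.1 j) :=
      (continuous_apply j).comp continuous_subtype_val
    exact IsOpen.preimage hco (isOpen_discrete {u.1 j})
  -- compactness: finitely many of these cover C
  have hCcomp : IsCompact C := hC.1.isCompact
  obtain ⟨s, hscov⟩ := hCcomp.elim_finite_subcover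
    (fun u : C => {v : Discontinuum A Q B | ∀ j : ℤ, |j| ≤ ((n u : ℕ) : ℤ) → v.1 j = (u : Discontinuum A Q B).1 j})
    (fun u => hopen u (n u))
    (fun u hu => Set.mem_iUnion.mpr ⟨⟨u, hu⟩, fun j _ => rfl⟩)
  refine ⟨s.sup fun u => n u, fun u v hag hu => ?_⟩
  obtain ⟨w, hws, hu'⟩ := Set.mem_iUnion₂.mp (hscov hu)
  have hle : ((n w : ℕ) : ℤ) ≤ ((s.sup fun u => n u : ℕ) : ℤ) := by
    exact_mod_cast Finset.le_sup (f := fun u : C => n u) hws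
  have hv : v ∈ {v : Discontinuum A Q B | ∀ j : ℤ, |j| ≤ ((n w : ℕ) : ℤ) → v.1 j = (w : Discontinuum A Q B).1 j} := by
    intro j hj
    rw [← hag j (hj.trans hle)]
    exact hu' j hj
  exact hn w w.2 hv

end AuxWdet
section AuxComb

variable {A Q B : Type*}

/-- The window of width `2N+1` of an element of the discontinuum. -/
def dwindow (N : ℕ) (u : Discontinuum A Q B) : Fin (2*N+1) → A ⊕ Q ⊕ B :=
  fun k => u.1 ((k : ℤ) - N)

lemma agree_of_dwindow_eq {N : ℕ} {u v : Discontinuum A Q B}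
    (h : dwindow N u = dwindow N v) :
    ∀ j : ℤ, -(N : ℤ) ≤ j → j ≤ N → u.1 j = v.1 j := by
  intro j h1 h2
  have hk : (j + N).toNat < 2*N+1 := by omega
  have hco : ((((⟨(j + N).toNat, hk⟩ : Fin (2*N+1)) : ℕ)) : ℤ) - N = j := by
    simp only [Fin.val_mk]; omega
  have := congrFun h ⟨(j + N).toNat, hk⟩
  simpa only [dwindow, hco] using this

lemma autMap_coe (fA : Q × A → Q) (fB : Q → B) (u : Discontinuum A Q B) (i : ℤ) :
    (autMap fA fB u).1 i = if i = -1 then Sum.inr (Sum.inr (fB u.state))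
      else if i = 0 then Sum.inr (Sum.inl (fA (u.state, u.input)))
      else u.1 (i + 1) := rfl

lemma state_spec (u : Discontinuum A Q B) : u.1 0 = Sum.inr (Sum.inl u.state) :=
  u.2.2.1.choose_spec

lemma input_spec (u : Discontinuum A Q B) : u.1 1 = Sum.inl u.input :=
  (u.2.1 1 one_pos).choose_spec

lemma autMap_agree (fA : Q × A → Q) (fB : Q → B) {N : ℕ} (hN : 1 ≤ N)
    {u v : Discontinuum A Q B}
    (hag : ∀ j : ℤ, -(N : ℤ) ≤ j → j ≤ N → u.1 j = v.1 j) :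
    ∀ j : ℤ, -(N : ℤ) ≤ j → j ≤ (N : ℤ) - 1 → (autMap fA fB u).1 j = (autMap fA fB v).1 j := by
  have hstate : u.state = v.state := by
    have h0 := hag 0 (by omega) (by omega)
    rw [state_spec u, state_spec v] at h0
    simpa using h0
  have hinput : u.input = v.input := by
    have h1 := hag 1 (by omega) (by exact_mod_cast hN)
    rw [input_spec u, input_spec v] at h1
    simpa using h1
  intro j h1 h2
  rw [autMap_coe, autMap_coe]
  by_cases hj1 : j = -1
  · rw [if_pos hj1, if_pos hj1, hstate]
  · rw [if_neg hj1, if_neg hj1]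
    by_cases hj0 : j = 0
    · rw [if_pos hj0, if_pos hj0, hstate, hinput]
    · rw [if_neg hj0, if_neg hj0]
      exact hag (j + 1) (by omega) (by omega)

lemma iterate_pos_coord (fA : Q × A → Q) (fB : Q → B) (x : Discontinuum A Q B) :
    ∀ (i : ℕ) (m : ℤ), 1 ≤ m → ((autMap fA fB)^[i] x).1 m = x.1 (m + i) := by
  intro i
  induction i with
  | zero => intro m _; simp
  | succ i IH =>
    intro m hm
    rw [Function.iterate_succ_apply', autMap_coe, if_neg (by omega), if_neg (by omega),
      IH (m + 1) (by omega)]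
    push_cast
    ring_nf

lemma discontinuum_nonempty [Nonempty A] [Nonempty Q] [Nonempty B] :
    Nonempty (Discontinuum A Q B) := by
  refine ⟨⟨fun i => if 0 < i then Sum.inl (Classical.arbitrary A)
    else if i = 0 then Sum.inr (Sum.inl (Classical.arbitrary Q))
    else Sum.inr (Sum.inr (Classical.arbitrary B)), ?_, ?_, ?_⟩⟩
  · intro i hi; exact ⟨Classical.arbitrary A, by simp [hi]⟩
  · exact ⟨Classical.arbitrary Q, by norm_num⟩
  · intro i hi
    exact ⟨Classical.arbitrary B, by beta_reduce; rw [if_neg (by omega), if_neg (by omega)]⟩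

variable {Y : Type*}

/-- A window is compatible with a set `S` if it is the window of a point of `φ⁻¹ S`. -/
def WCompat (φ : Discontinuum A Q B → Y) (N : ℕ) (d : Fin (2*N+1) → A ⊕ Q ⊕ B)
    (S : Set Y) : Prop :=
  ∃ u : Discontinuum A Q B, dwindow N u = d ∧ φ u ∈ S

/-- The successor relation on windows induced by the automaton map. -/
def WSucc (fA : Q × A → Q) (fB : Q → B) (N : ℕ)
    (d d' : Fin (2*N+1) → A ⊕ Q ⊕ B) : Prop :=
  ∃ u u' : Discontinuum A Q B, dwindow N u = d ∧ dwindow N u' = d' ∧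
    ∀ j : ℤ, -(N : ℤ) ≤ j → j ≤ (N : ℤ) - 1 → u'.1 j = (autMap fA fB u).1 j

/-- The subset-construction DFA recognizing the itinerary language. -/
def autDFA (φ : Discontinuum A Q B → Y) (α : Set (Set Y)) (fA : Q × A → Q)
    (fB : Q → B) (N : ℕ) : DFA (↥α) (Set (Fin (2*N+1) → A ⊕ Q ⊕ B)) where
  step T S := {d' | ∃ d ∈ T, WCompat φ N d (S : Set Y) ∧ WSucc fA fB N d d'}
  start := Set.univ
  accept := {T | T.Nonempty}

lemma autDFA_evalFrom (φ : Discontinuum A Q B → Y) (α : Set (Set Y)) (fA : Q × A → Q)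
    (fB : Q → B) (N : ℕ) (w : List ↥α) :
    ∀ (T : Set (Fin (2*N+1) → A ⊕ Q ⊕ B)) (d : Fin (2*N+1) → A ⊕ Q ⊕ B),
    (d ∈ (autDFA φ α fA fB N).evalFrom T w ↔
      ∃ r : ℕ → (Fin (2*N+1) → A ⊕ Q ⊕ B), r 0 ∈ T ∧ r w.length = d ∧
        ∀ (i : ℕ) (h : i < w.length),
          WCompat φ N (r i) (w.get ⟨i, h⟩ : Set Y) ∧ WSucc fA fB N (r i) (r (i + 1))) := by
  induction w with
  | nil =>
    intro T d
    constructor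
    · intro hd
      exact ⟨fun _ => d, hd, rfl, fun i h => absurd h (by simp)⟩
    · rintro ⟨r, hr0, hrd, -⟩
      simpa [DFA.evalFrom, ← hrd] using hr0
  | cons a w IH =>
    intro T d
    have hstep : (autDFA φ α fA fB N).evalFrom T (a :: w) =
        (autDFA φ α fA fB N).evalFrom ((autDFA φ α fA fB N).step T a) w := rfl
    rw [hstep, IH]
    constructor
    · rintro ⟨r', hr'0, hr'd, hr'⟩
      obtain ⟨d₀, hd₀T, hc₀, hs₀⟩ := hr'0
      refine ⟨fun n => match n with | 0 => d₀ | n+1 => r' n, hd₀T, hr'd, ?_⟩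
      intro i h
      match i with
      | 0 => exact ⟨hc₀, hs₀⟩
      | i+1 => exact hr' i (by simpa using h)
    · rintro ⟨r, hr0, hrd, hr⟩
      have h0 : 0 < (a :: w).length := by simp
      refine ⟨fun n => r (n + 1), ?_, hrd, ?_⟩
      · exact ⟨r 0, hr0, (hr 0 h0).1, (hr 0 h0).2⟩
      · intro i h
        exact hr (i + 1) (by simpa using Nat.succ_lt_succ h)

end AuxComb
section AuxMain

variable {A Q B Y : Type*}

lemma run_of_itinerary (φ : Discontinuum A Q B → Y) (fA : Q × A → Q) (fB : Q → B)
    (N : ℕ) {α : Set (Set Y)} (w : List ↥α) (x : Discontinuum A Q B)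
    (hx : ∀ (i : ℕ) (h : i < w.length), φ ((autMap fA fB)^[i] x) ∈ (w.get ⟨i, h⟩ : Set Y)) :
    ∃ r : ℕ → (Fin (2*N+1) → A ⊕ Q ⊕ B), ∀ (i : ℕ) (h : i < w.length),
      WCompat φ N (r i) (w.get ⟨i, h⟩ : Set Y) ∧ WSucc fA fB N (r i) (r (i + 1)) := by
  refine ⟨fun i => dwindow N ((autMap fA fB)^[i] x), fun i h => ?_⟩
  constructor
  · exact ⟨(autMap fA fB)^[i] x, rfl, hx i h⟩
  · exact ⟨(autMap fA fB)^[i] x, (autMap fA fB)^[i+1] x, rfl, rfl,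
      fun j _ _ => by rw [Function.iterate_succ_apply']⟩

lemma itinerary_of_run (φ : Discontinuum A Q B → Y) (fA : Q × A → Q) (fB : Q → B)
    {N : ℕ} (hN : 1 ≤ N) {α : Set (Set Y)} (w : List ↥α)
    (hdet : ∀ (i : ℕ) (h : i < w.length), WDet N (φ ⁻¹' (w.get ⟨i, h⟩ : Set Y)))
    (hw : w ≠ []) (r : ℕ → (Fin (2*N+1) → A ⊕ Q ⊕ B))
    (hr : ∀ (i : ℕ) (h : i < w.length),
      WCompat φ N (r i) (w.get ⟨i, h⟩ : Set Y) ∧ WSucc fA fB N (r i) (r (i + 1))) :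
    ∃ x : Discontinuum A Q B, ∀ (i : ℕ) (h : i < w.length),
      φ ((autMap fA fB)^[i] x) ∈ (w.get ⟨i, h⟩ : Set Y) := by
  classical
  have hk : 1 ≤ w.length := List.length_pos_iff.mpr hw
  -- choose witnesses
  have hu0 : ∀ i : ℕ, ∃ u : Discontinuum A Q B, ∀ h : i < w.length,
      dwindow N u = r i ∧ φ u ∈ (w.get ⟨i, h⟩ : Set Y) := by
    intro i
    by_cases h : i < w.length
    · obtain ⟨u, hu1, hu2⟩ := (hr i h).1
      exact ⟨u, fun _ => ⟨hu1, hu2⟩⟩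
    · obtain ⟨u0, -, -⟩ := (hr 0 hk).1
      exact ⟨u0, fun h' => absurd h' h⟩
  choose u hu using hu0
  -- build the input sequence
  set xval : ℤ → A ⊕ Q ⊕ B := fun j =>
    if j ≤ (N : ℤ) then (u 0).1 j
    else (u (min (j - N).toNat (w.length - 1))).1 N with hxval

  have htyped : (∀ j : ℤ, 0 < j → ∃ a : A, xval j = Sum.inl a) ∧
      (∃ q : Q, xval 0 = Sum.inr (Sum.inl q)) ∧
      (∀ j : ℤ, j < 0 → ∃ b : B, xval j = Sum.inr (Sum.inr b)) := by
    refine ⟨?_, ?_, ?_⟩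
    · intro j hj
      by_cases h : j ≤ (N : ℤ)
      · obtain ⟨a, ha⟩ := (u 0).2.1 j hj
        exact ⟨a, by rw [hxval]; beta_reduce; rw [if_pos h, ha]⟩
      · obtain ⟨a, ha⟩ := (u (min (j - N).toNat (w.length - 1))).2.1 N (by exact_mod_cast hN)
        exact ⟨a, by rw [hxval]; beta_reduce; rw [if_neg h, ha]⟩
    · obtain ⟨q, hq⟩ := (u 0).2.2.1
      exact ⟨q, by rw [hxval]; beta_reduce; rw [if_pos (by omega), hq]⟩
    · intro j hj
      obtain ⟨b, hb⟩ := (u 0).2.2.2 j hj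
      exact ⟨b, by rw [hxval]; beta_reduce; rw [if_pos (by omega), hb]⟩
  refine ⟨⟨xval, htyped⟩, ?_⟩
  intro i hi
  set xx : Discontinuum A Q B := (⟨xval, htyped⟩ : Discontinuum A Q B) with hxx
  -- main claim
  have main : ∀ i, i < w.length → ∀ j : ℤ, -(N : ℤ) ≤ j → j ≤ N →
      ((autMap fA fB)^[i] xx).1 j = (u i).1 j := by
    intro i
    induction i with
    | zero =>
      intro _ j _ h2
      rw [Function.iterate_zero_apply]
      show xval j = (u 0).1 j
      rw [hxval]; beta_reduce; rw [if_pos h2]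
    | succ i IH =>
      intro hik j h1 h2
      have hik' : i < w.length := by omega
      have hIH := IH hik'
      rw [Function.iterate_succ_apply']
      obtain ⟨v, v', hv, hv', hagree⟩ := (hr i hik').2
      have hwui : dwindow N (u i) = r i := (hu i hik').1
      have hwui1 : dwindow N (u (i+1)) = r (i+1) := (hu (i+1) hik).1
      by_cases hjN : j ≤ (N : ℤ) - 1
      · have e1 : (autMap fA fB ((autMap fA fB)^[i] xx)).1 j = (autMap fA fB (u i)).1 j :=
          autMap_agree fA fB hN hIH j h1 hjN
        have e2 : (autMap fA fB (u i)).1 j = (autMap fA fB v).1 j :=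
          autMap_agree fA fB hN (agree_of_dwindow_eq (hwui.trans hv.symm)) j h1 hjN
        have e3 : v'.1 j = (u (i+1)).1 j :=
          agree_of_dwindow_eq (hv'.trans hwui1.symm) j h1 (by omega)
        rw [e1, e2, ← hagree j h1 hjN, e3]
      · have hjeq : j = (N : ℤ) := by omega
        subst hjeq
        rw [autMap_coe, if_neg (by omega), if_neg (by omega),
          iterate_pos_coord fA fB xx i ((N : ℤ) + 1) (by omega)]
        show xval ((N : ℤ) + 1 + i) = (u (i+1)).1 N
        rw [hxval]; beta_reduce
        rw [if_neg (by omega)]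
        have hidx : min (((N : ℤ) + 1 + i - N).toNat) (w.length - 1) = i + 1 := by omega
        rw [hidx]
  exact hdet i hi (u i) ((autMap fA fB)^[i] xx)
    (fun j hj => (main i hi j (abs_le.mp hj).1 (abs_le.mp hj).2).symm) (hu i hi).2

end AuxMain
/-- Any factor of a finite automaton is clopen-regular. -/
theorem clopenRegular_of_isFactorOfFiniteAutomaton {Y : Type*} [MetricSpace Y]
    [CompactSpace Y] (g : Y → Y) (hg : Continuous g)
    (hfac : IsFactorOfFiniteAutomaton g) : ClopenRegular g := by
  classical
  obtain ⟨A, Q, B, hFA, hFQ, hFB, hNA, hNQ, hNB, fA, fB, φ, hφc, hφs, hcomm⟩ := hfac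
  haveI := hFA; haveI := hFQ; haveI := hFB
  haveI := hNA; haveI := hNQ; haveI := hNB
  intro α hαfin hαclopen hαcover
  -- semiconjugacy
  have hsc : Function.Semiconj φ (autMap fA fB) g := fun x => (congrFun hcomm x).symm
  have hiter : ∀ (i : ℕ) (x : Discontinuum A Q B),
      g^[i] (φ x) = φ ((autMap fA fB)^[i] x) := fun i x => ((hsc.iterate_right i) x).symm
  -- choose the window size
  have hdet0 : ∀ S : Set Y, ∃ n : ℕ, S ∈ α → WDet n (φ ⁻¹' S) := by
    intro S
    by_cases hS : S ∈ α
    · obtain ⟨n, hn⟩ := exists_wdet (φ ⁻¹' S) ((hαclopen S hS).preimage hφc)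
      exact ⟨n, fun _ => hn⟩
    · exact ⟨0, fun h => absurd h hS⟩
  choose n hn using hdet0
  set N : ℕ := 1 + hαfin.toFinset.sup n with hNdef
  have hN1 : 1 ≤ N := Nat.le_add_right 1 _
  have hdet : ∀ S ∈ α, WDet N (φ ⁻¹' S) := by
    intro S hS
    refine (hn S hS).mono ?_
    have := Finset.le_sup (f := n) (hαfin.mem_toFinset.mpr hS)
    omega
  refine ⟨Set (Fin (2*N+1) → A ⊕ Q ⊕ B), Fintype.ofFinite _, autDFA φ α fA fB N, ?_⟩
  ext w
  rw [DFA.mem_accepts]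
  have haccept : (autDFA φ α fA fB N).accept = {T | T.Nonempty} := rfl
  have hstart : (autDFA φ α fA fB N).start = Set.univ := rfl
  constructor
  · intro hacc
    obtain ⟨d, hd⟩ := hacc
    rw [DFA.eval, hstart] at hd
    obtain ⟨r, -, -, hrun⟩ := (autDFA_evalFrom φ α fA fB N w Set.univ d).mp hd
    by_cases hwnil : w = []
    · subst hwnil
      obtain ⟨x0⟩ := discontinuum_nonempty (A := A) (Q := Q) (B := B)
      exact ⟨φ x0, fun i => absurd i.isLt (by simp)⟩
    · obtain ⟨x, hx⟩ := itinerary_of_run φ fA fB hN1 w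
        (fun i h => hdet _ (w.get ⟨i, h⟩).2) hwnil r hrun
      refine ⟨φ x, fun i => ?_⟩
      rw [hiter]
      exact hx i i.isLt
  · rintro ⟨y, hy⟩
    obtain ⟨x, rfl⟩ := hφs y
    have hx : ∀ (i : ℕ) (h : i < w.length),
        φ ((autMap fA fB)^[i] x) ∈ (w.get ⟨i, h⟩ : Set Y) := by
      intro i h
      have := hy ⟨i, h⟩
      rwa [hiter] at this
    obtain ⟨r, hr⟩ := run_of_itinerary φ fA fB N w x hx
    refine ⟨r w.length, ?_⟩
    rw [DFA.eval, hstart]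
    exact (autDFA_evalFrom φ α fA fB N w Set.univ (r w.length)).mpr
      ⟨r, Set.mem_univ _, rfl, hr⟩
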